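/- Let n ≥ 1 be an integer and α ∈ (0,1) with n > 2α, and let σ satisfy 0 < σ < 2α/(n − 2α). Then there exists a constant C > 0, depending only on n, α, σ, such that for every measurable u : ℝⁿ → ℂ with u ∈ L²(ℝⁿ) and finite Gagliardo seminorm [u]_α := (∫_{ℝⁿ}∫_{ℝⁿ} |u(x) − u(y)|²/|x − y|^{n+2α} dx dy)^{1/2}, one has u ∈ L^{2σ+2}(ℝⁿ) and ∫_{ℝⁿ} |u|^{2σ+2} dx ≤ C · [u]_α^{nσ/α} · ‖u‖_{L²}^{2σ+2 − nσ/α}. -/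

import Mathlib

open MeasureTheory ENNReal Metric

noncomputable section
namespace GN

variable {n : ℕ}

/-- The Gagliardo kernel. -/
def gker (n : ℕ) (α : ℝ) (u : EuclideanSpace ℝ (Fin n) → ℂ) (x y : EuclideanSpace ℝ (Fin n)) : ℝ≥0∞ :=
  (‖u x - u y‖₊ : ℝ≥0∞) ^ 2 / ENNReal.ofReal (‖x - y‖ ^ ((n : ℝ) + 2 * α))

def gfun (n : ℕ) (α : ℝ) (u : EuclideanSpace ℝ (Fin n) → ℂ) (x : EuclideanSpace ℝ (Fin n)) : ℝ≥0∞ :=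
  ∫⁻ y, gker n α u x y

def Dsq (n : ℕ) (α : ℝ) (u : EuclideanSpace ℝ (Fin n) → ℂ) : ℝ≥0∞ := ∫⁻ x, gfun n α u x

def Iexp (n : ℕ) (p : ℝ) (u : EuclideanSpace ℝ (Fin n) → ℂ) : ℝ≥0∞ :=
  ∫⁻ x, (‖u x‖₊ : ℝ≥0∞) ^ p

lemma gker_measurable {α : ℝ} (hα : 0 ≤ α) {u : EuclideanSpace ℝ (Fin n) → ℂ} (hu : Measurable u) :
    Measurable (Function.uncurry (gker n α u)) := by
  apply Measurable.div
  · exact (measurable_coe_nnreal_ennreal.comp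
      (((hu.comp measurable_fst).sub (hu.comp measurable_snd)).nnnorm)).pow_const 2
  · have hc : Continuous fun p : EuclideanSpace ℝ (Fin n) × EuclideanSpace ℝ (Fin n) =>
        ‖p.1 - p.2‖ ^ ((n : ℝ) + 2 * α) :=
      Real.continuous_rpow_const (by positivity) |>.comp (continuous_fst.sub continuous_snd).norm
    exact ENNReal.measurable_ofReal.comp hc.measurable

lemma gfun_measurable {α : ℝ} (hα : 0 ≤ α) {u : EuclideanSpace ℝ (Fin n) → ℂ} (hu : Measurable u) :
    Measurable (gfun n α u) :=
  (gker_measurable hα hu).lintegral_prod_right'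

end GN

namespace GN

lemma holder_restrict {X : Type*} [MeasurableSpace X] (μ : Measure X) {f : X → ℝ≥0∞}
    (hf : Measurable f) (s : Set X) {q : ℝ} (hq : 2 ≤ q) :
    ∫⁻ y in s, f y ^ (2 : ℝ) ∂μ
      ≤ (∫⁻ y in s, f y ^ q ∂μ) ^ (2 / q) * (μ s) ^ (1 - 2 / q) := by
  rcases eq_or_lt_of_le hq with h | h
  · subst h
    simp [ENNReal.rpow_one]
  · have hq0 : (0 : ℝ) < q := by linarith
    have hpq : (q / 2).HolderConjugate (q / (q - 2)) := by
      rw [Real.holderConjugate_iff]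
      constructor
      · linarith [(by linarith : (2:ℝ) < q)]
      · field_simp
        ring
    have H := ENNReal.lintegral_mul_le_Lp_mul_Lq (μ.restrict s) hpq
      ((hf.pow_const (2 : ℝ)).aemeasurable) (aemeasurable_const (b := (1:ℝ≥0∞)))
    simp only [Pi.mul_apply, mul_one, ENNReal.one_rpow, lintegral_one,
      Measure.restrict_apply_univ] at H
    calc ∫⁻ y in s, f y ^ (2:ℝ) ∂μ
        ≤ (∫⁻ y in s, (f y ^ (2:ℝ)) ^ (q/2) ∂μ) ^ (1/(q/2)) * (μ s) ^ (1/(q/(q-2))) := H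
      _ = (∫⁻ y in s, f y ^ q ∂μ) ^ (2/q) * (μ s) ^ (1 - 2/q) := by
          have hq2 : q - 2 ≠ 0 := by linarith
          have h1 : ∀ y : X, (f y ^ (2:ℝ)) ^ (q/2) = f y ^ q := by
            intro y
            rw [← ENNReal.rpow_mul]
            congr 1
            field_simp
          have e1 : (1:ℝ)/(q/2) = 2/q := by field_simp
          have e2 : (1:ℝ)/(q/(q-2)) = 1 - 2/q := by
            field_simp
          simp only [h1, e1, e2]

end GN

namespace GN

lemma sq_le_three (a b c : ℝ≥0∞) (h : a ≤ b + c) : a ^ 2 ≤ 3 * b ^ 2 + 3 * c ^ 2 := by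
  have hbc : b * c ≤ b ^ 2 + c ^ 2 := by
    rcases le_total b c with h' | h'
    · calc b * c ≤ c * c := mul_le_mul_left h' c
        _ = c ^ 2 := (sq c).symm
        _ ≤ b ^ 2 + c ^ 2 := le_add_self
    · calc b * c ≤ b * b := mul_le_mul_right h' b
        _ = b ^ 2 := (sq b).symm
        _ ≤ b ^ 2 + c ^ 2 := le_self_add
  calc a ^ 2 ≤ (b + c) ^ 2 := pow_le_pow_left' h 2
    _ = b ^ 2 + (b * c + b * c) + c ^ 2 := by ring
    _ ≤ b ^ 2 + ((b ^ 2 + c ^ 2) + (b ^ 2 + c ^ 2)) + c ^ 2 := by gcongr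
    _ = 3 * b ^ 2 + 3 * c ^ 2 := by ring

lemma pt_ker {α : ℝ} (hα : 0 < α) (u : EuclideanSpace ℝ (Fin n) → ℂ)
    (x y : EuclideanSpace ℝ (Fin n)) {r : ℝ} (hr : 0 < r) (hy : y ∈ ball x r) :
    (‖u x - u y‖₊ : ℝ≥0∞) ^ 2 ≤ ENNReal.ofReal (r ^ ((n : ℝ) + 2 * α)) * gker n α u x y := by
  rcases eq_or_ne y x with rfl | hne
  · simp [gker]
  · have hxy : (0 : ℝ) < ‖x - y‖ := by
      rw [norm_pos_iff, sub_ne_zero]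
      exact fun h => hne h.symm
    have hc : (0 : ℝ) ≤ (n : ℝ) + 2 * α := by positivity
    have hlt : ‖x - y‖ ≤ r := by
      have h1 := mem_ball.mp hy
      rw [dist_eq_norm, ← norm_neg, neg_sub] at h1
      exact h1.le
    have hpow : ‖x - y‖ ^ ((n : ℝ) + 2 * α) ≤ r ^ ((n : ℝ) + 2 * α) :=
      Real.rpow_le_rpow hxy.le hlt hc
    have h0 : ENNReal.ofReal (r ^ ((n : ℝ) + 2 * α)) ≠ 0 := by
      rw [Ne, ENNReal.ofReal_eq_zero, not_le]
      positivity
    calc (‖u x - u y‖₊ : ℝ≥0∞) ^ 2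
        = ENNReal.ofReal (r ^ ((n : ℝ) + 2 * α)) *
            ((‖u x - u y‖₊ : ℝ≥0∞) ^ 2 / ENNReal.ofReal (r ^ ((n : ℝ) + 2 * α))) :=
          (ENNReal.mul_div_cancel h0 ofReal_ne_top).symm
      _ ≤ ENNReal.ofReal (r ^ ((n : ℝ) + 2 * α)) * gker n α u x y := by
          unfold gker
          have := ENNReal.ofReal_le_ofReal (p := ‖x - y‖ ^ ((n : ℝ) + 2 * α)) hpow
          gcongr

lemma ball_bound {α : ℝ} (hα : 0 < α) {u : EuclideanSpace ℝ (Fin n) → ℂ}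
    (hu : Measurable u) {q : ℝ} (hq : 2 ≤ q) (x : EuclideanSpace ℝ (Fin n))
    {r : ℝ} (hr : 0 < r) :
    (‖u x‖₊ : ℝ≥0∞) ^ 2 * volume (ball x r)
      ≤ 3 * (ENNReal.ofReal (r ^ ((n : ℝ) + 2 * α)) * gfun n α u x)
        + 3 * ((Iexp n q u) ^ (2 / q) * (volume (ball x r)) ^ (1 - 2 / q)) := by
  have hmeas1 : Measurable fun y => (‖u x - u y‖₊ : ℝ≥0∞) ^ 2 :=
    (measurable_coe_nnreal_ennreal.comp ((measurable_const.sub hu).nnnorm)).pow_const 2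
  have hmeas2 : Measurable fun y => (‖u y‖₊ : ℝ≥0∞) ^ 2 :=
    (measurable_coe_nnreal_ennreal.comp hu.nnnorm).pow_const 2
  calc (‖u x‖₊ : ℝ≥0∞) ^ 2 * volume (ball x r)
      = ∫⁻ _ in ball x r, (‖u x‖₊ : ℝ≥0∞) ^ 2 := (setLIntegral_const _ _).symm
    _ ≤ ∫⁻ y in ball x r, (3 * (‖u x - u y‖₊ : ℝ≥0∞) ^ 2 + 3 * (‖u y‖₊ : ℝ≥0∞) ^ 2) := by
        refine setLIntegral_mono ((hmeas1.const_mul 3).add (hmeas2.const_mul 3)) ?_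
        intro y _
        refine sq_le_three _ _ _ ?_
        calc ((‖u x‖₊ : ℝ≥0∞)) = ((‖u x - u y + u y‖₊ : ℝ≥0∞)) := by rw [sub_add_cancel]
          _ ≤ (‖u x - u y‖₊ : ℝ≥0∞) + (‖u y‖₊ : ℝ≥0∞) := by
              rw [← ENNReal.coe_add]
              exact ENNReal.coe_le_coe.mpr (nnnorm_add_le _ _)
    _ = (∫⁻ y in ball x r, 3 * (‖u x - u y‖₊ : ℝ≥0∞) ^ 2)
        + ∫⁻ y in ball x r, 3 * (‖u y‖₊ : ℝ≥0∞) ^ 2 :=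
        lintegral_add_left (hmeas1.const_mul 3) _
    _ ≤ 3 * (ENNReal.ofReal (r ^ ((n : ℝ) + 2 * α)) * gfun n α u x)
        + 3 * ((Iexp n q u) ^ (2 / q) * (volume (ball x r)) ^ (1 - 2 / q)) := by
        refine add_le_add ?_ ?_
        · rw [lintegral_const_mul 3 hmeas1]
          refine mul_le_mul_right ?_ 3
          calc ∫⁻ y in ball x r, (‖u x - u y‖₊ : ℝ≥0∞) ^ 2
              ≤ ∫⁻ y in ball x r, ENNReal.ofReal (r ^ ((n : ℝ) + 2 * α)) * gker n α u x y :=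
                setLIntegral_mono
                  (((gker_measurable hα.le hu).comp measurable_prodMk_left).const_mul _)
                  (fun y hy => pt_ker hα u x y hr hy)
            _ = ENNReal.ofReal (r ^ ((n : ℝ) + 2 * α)) * ∫⁻ y in ball x r, gker n α u x y :=
                lintegral_const_mul' _ _ ofReal_ne_top
            _ ≤ ENNReal.ofReal (r ^ ((n : ℝ) + 2 * α)) * gfun n α u x :=
                mul_le_mul_right (setLIntegral_le_lintegral _ _) _
        · rw [lintegral_const_mul 3 hmeas2]
          refine mul_le_mul_right ?_ 3
          calc ∫⁻ y in ball x r, (‖u y‖₊ : ℝ≥0∞) ^ 2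
              = ∫⁻ y in ball x r, (‖u y‖₊ : ℝ≥0∞) ^ (2 : ℝ) := by
                simp_rw [ENNReal.rpow_two]
            _ ≤ (∫⁻ y in ball x r, (‖u y‖₊ : ℝ≥0∞) ^ q) ^ (2 / q)
                  * (volume (ball x r)) ^ (1 - 2 / q) :=
                holder_restrict _ (measurable_coe_nnreal_ennreal.comp hu.nnnorm) _ hq
            _ ≤ (Iexp n q u) ^ (2 / q) * (volume (ball x r)) ^ (1 - 2 / q) := by
                have hle : (∫⁻ y in ball x r, (‖u y‖₊ : ℝ≥0∞) ^ q) ≤ Iexp n q u :=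
                  setLIntegral_le_lintegral _ _
                gcongr

open Filter

lemma opt {β γ : ℝ} (hβ : 0 < β) (hγ : 0 < γ) {G N X : ℝ≥0∞}
    (hG : G ≠ ∞) (hN : N ≠ ∞)
    (h : ∀ r : ℝ, 0 < r → X ≤ ENNReal.ofReal (r ^ β) * G + ENNReal.ofReal (r ^ (-γ)) * N) :
    X ≤ 2 * (G ^ (γ / (β + γ)) * N ^ (β / (β + γ))) := by
  have hs : 0 < β + γ := by linarith
  rcases eq_or_ne G 0 with hG0 | hG0
  · have hX : X ≤ 0 := by
      have h1 : Tendsto (fun r : ℝ => r ^ (-γ)) atTop (nhds 0) := tendsto_rpow_neg_atTop hγ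
      have h2 : Tendsto (fun r : ℝ => ENNReal.ofReal (r ^ (-γ))) atTop (nhds 0) := by
        have := (ENNReal.continuous_ofReal.tendsto 0).comp h1
        simpa [Function.comp_def] using this
      have h3 : Tendsto (fun r : ℝ => ENNReal.ofReal (r ^ (-γ)) * N) atTop (nhds 0) := by
        have := ENNReal.Tendsto.mul_const h2 (Or.inr hN)
        simpa using this
      refine ge_of_tendsto h3 ?_
      filter_upwards [eventually_gt_atTop 0] with r hr
      have := h r hr
      simpa [hG0] using this
    calc X ≤ 0 := hX
      _ ≤ _ := zero_le
  rcases eq_or_ne N 0 with hN0 | hN0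
  · have hX : X ≤ 0 := by
      have h1 : Tendsto (fun r : ℝ => r ^ β) (nhdsWithin 0 (Set.Ioi 0)) (nhds 0) := by
        have hc : ContinuousWithinAt (fun r : ℝ => r ^ β) (Set.Ioi 0) 0 :=
          (Real.continuousAt_rpow_const 0 β (Or.inr hβ.le)).continuousWithinAt
        have h0 : (0 : ℝ) ^ β = 0 := Real.zero_rpow hβ.ne'
        simpa [ContinuousWithinAt, h0] using hc
      have h2 : Tendsto (fun r : ℝ => ENNReal.ofReal (r ^ β)) (nhdsWithin 0 (Set.Ioi 0))
          (nhds 0) := by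
        have := (ENNReal.continuous_ofReal.tendsto 0).comp h1
        simpa [Function.comp_def] using this
      have h3 : Tendsto (fun r : ℝ => ENNReal.ofReal (r ^ β) * G) (nhdsWithin 0 (Set.Ioi 0))
          (nhds 0) := by
        have := ENNReal.Tendsto.mul_const h2 (Or.inr hG)
        simpa using this
      refine ge_of_tendsto h3 ?_
      filter_upwards [eventually_mem_nhdsWithin] with r hr
      have := h r hr
      simpa [hN0] using this
    calc X ≤ 0 := hX
      _ ≤ _ := zero_le
  · -- main case
    have hg : 0 < G.toReal := ENNReal.toReal_pos hG0 hG
    have hm : 0 < N.toReal := ENNReal.toReal_pos hN0 hN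
    set g := G.toReal with hgdef
    set m := N.toReal with hmdef
    set r : ℝ := (m / g) ^ (1 / (β + γ)) with hrdef
    have hr : 0 < r := by positivity
    have hfs : β / (β + γ) + γ / (β + γ) = 1 := by field_simp
    have key1 : r ^ β * g = g ^ (γ / (β + γ)) * m ^ (β / (β + γ)) := by
      rw [hrdef, ← Real.rpow_mul (by positivity : (0:ℝ) ≤ m / g),
        show 1 / (β + γ) * β = β / (β + γ) by ring, Real.div_rpow hm.le hg.le]
      have h4 : g / g ^ (β / (β + γ)) = g ^ (γ / (β + γ)) := by
        rw [show γ / (β + γ) = 1 - β / (β + γ) by linarith, Real.rpow_sub hg, Real.rpow_one]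
      calc m ^ (β / (β + γ)) / g ^ (β / (β + γ)) * g
          = m ^ (β / (β + γ)) * (g / g ^ (β / (β + γ))) := by ring
        _ = g ^ (γ / (β + γ)) * m ^ (β / (β + γ)) := by rw [h4]; ring
    have key2 : r ^ (-γ) * m = g ^ (γ / (β + γ)) * m ^ (β / (β + γ)) := by
      rw [hrdef, ← Real.rpow_mul (by positivity : (0:ℝ) ≤ m / g),
        show 1 / (β + γ) * (-γ) = -(γ / (β + γ)) by ring,
        Real.rpow_neg (by positivity : (0:ℝ) ≤ m / g), Real.div_rpow hm.le hg.le]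
      have h4 : m / m ^ (γ / (β + γ)) = m ^ (β / (β + γ)) := by
        rw [show β / (β + γ) = 1 - γ / (β + γ) by linarith, Real.rpow_sub hm, Real.rpow_one]
      have hmg : m ^ (γ / (β + γ)) ≠ 0 := by positivity
      have hgg : g ^ (γ / (β + γ)) ≠ 0 := by positivity
      calc (m ^ (γ / (β + γ)) / g ^ (γ / (β + γ)))⁻¹ * m
          = g ^ (γ / (β + γ)) * (m / m ^ (γ / (β + γ))) := by
            field_simp
        _ = g ^ (γ / (β + γ)) * m ^ (β / (β + γ)) := by rw [h4]
    have e1 : ENNReal.ofReal (r ^ β) * G = G ^ (γ / (β + γ)) * N ^ (β / (β + γ)) := by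
      conv_lhs => rw [← ENNReal.ofReal_toReal hG]
      rw [← ENNReal.ofReal_mul (by positivity : (0:ℝ) ≤ r ^ β)]
      rw [show G.toReal = g from rfl, key1,
        ENNReal.ofReal_mul (by positivity : (0:ℝ) ≤ g ^ (γ / (β + γ))),
        ← ENNReal.ofReal_rpow_of_pos hg, ← ENNReal.ofReal_rpow_of_pos hm,
        show ENNReal.ofReal g = G from ENNReal.ofReal_toReal hG,
        show ENNReal.ofReal m = N from ENNReal.ofReal_toReal hN]
    have e2 : ENNReal.ofReal (r ^ (-γ)) * N = G ^ (γ / (β + γ)) * N ^ (β / (β + γ)) := by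
      conv_lhs => rw [← ENNReal.ofReal_toReal hN]
      rw [← ENNReal.ofReal_mul (by positivity : (0:ℝ) ≤ r ^ (-γ))]
      rw [show N.toReal = m from rfl, key2,
        ENNReal.ofReal_mul (by positivity : (0:ℝ) ≤ g ^ (γ / (β + γ))),
        ← ENNReal.ofReal_rpow_of_pos hg, ← ENNReal.ofReal_rpow_of_pos hm,
        show ENNReal.ofReal g = G from ENNReal.ofReal_toReal hG,
        show ENNReal.ofReal m = N from ENNReal.ofReal_toReal hN]
    calc X ≤ ENNReal.ofReal (r ^ β) * G + ENNReal.ofReal (r ^ (-γ)) * N := h r hr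
      _ = 2 * (G ^ (γ / (β + γ)) * N ^ (β / (β + γ))) := by rw [e1, e2, ← two_mul]

lemma step {n : ℕ} (hn : 1 ≤ n) {α : ℝ} (hα : 0 < α) (h2α : 2 * α < n) {q : ℝ} (hq : 2 ≤ q) :
    ∃ K : ℝ≥0∞, K ≠ 0 ∧ K ≠ ∞ ∧ ∀ u : EuclideanSpace ℝ (Fin n) → ℂ, Measurable u →
      Dsq n α u ≠ ∞ → Iexp n q u ≠ ∞ →
      Iexp n (2 + 2 * α * q / n) u
        ≤ K * Dsq n α u * (Iexp n q u) ^ (2 * α / n) := by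
  have hn0 : (0 : ℝ) < n := by exact_mod_cast hn
  have hq0 : (0 : ℝ) < q := by linarith
  set V₁ : ℝ≥0∞ := volume (ball (0 : EuclideanSpace ℝ (Fin n)) 1) with hV₁
  have hV0 : V₁ ≠ 0 := (measure_ball_pos volume 0 one_pos).ne'
  have hVt : V₁ ≠ ∞ := measure_ball_lt_top.ne
  set cG : ℝ≥0∞ := 3 * V₁⁻¹ with hcG
  set cN : ℝ≥0∞ := 3 * V₁ ^ (-(2 / q)) with hcN
  have hcG0 : cG ≠ 0 := by
    simp only [hcG, ne_eq, mul_eq_zero, not_or, ENNReal.inv_eq_zero]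
    exact ⟨by norm_num, hVt⟩
  have hcGt : cG ≠ ∞ :=
    ENNReal.mul_ne_top (by simp) (ENNReal.inv_ne_top.mpr hV0)
  have hrne0 : ∀ z : ℝ, V₁ ^ z ≠ 0 := fun z => by
    simp [ENNReal.rpow_eq_zero_iff, hV0, hVt]
  have hrnet : ∀ z : ℝ, V₁ ^ z ≠ ∞ := fun z => by
    simp [ENNReal.rpow_eq_top_iff, hV0, hVt]
  have hcN0 : cN ≠ 0 := by
    simp only [hcN, ne_eq, mul_eq_zero, not_or]
    exact ⟨by norm_num, hrne0 _⟩
  have hcNt : cN ≠ ∞ := ENNReal.mul_ne_top (by simp) (hrnet _)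
  have h2ne0 : ∀ z : ℝ, (2 : ℝ≥0∞) ^ z ≠ 0 := fun z => by
    simp [ENNReal.rpow_eq_zero_iff]
  have h2net : ∀ z : ℝ, (2 : ℝ≥0∞) ^ z ≠ ∞ := fun z => by
    simp [ENNReal.rpow_eq_top_iff]
  have hcNp0 : ∀ z : ℝ, cN ^ z ≠ 0 := fun z => by
    simp [ENNReal.rpow_eq_zero_iff, hcN0, hcNt]
  have hcNpt : ∀ z : ℝ, cN ^ z ≠ ∞ := fun z => by
    simp [ENNReal.rpow_eq_top_iff, hcN0, hcNt]
  refine ⟨2 ^ ((1 : ℝ) + α * q / n) * cG * cN ^ (α * q / n), ?_, ?_, ?_⟩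
  · exact mul_ne_zero (mul_ne_zero (h2ne0 _) hcG0) (hcNp0 _)
  · exact ENNReal.mul_ne_top (ENNReal.mul_ne_top (h2net _) hcGt) (hcNpt _)
  intro u hu hD hIq
  have hIq2t : (Iexp n q u) ^ (2 / q) ≠ ∞ :=
    ENNReal.rpow_ne_top_of_nonneg (by positivity) hIq
  set I2q : ℝ≥0∞ := (Iexp n q u) ^ (2 / q) with hI2q
  have main : ∀ x, gfun n α u x ≠ ∞ →
      (‖u x‖₊ : ℝ≥0∞) ^ ((2 : ℝ) + 2 * α * q / n)
        ≤ 2 ^ ((1 : ℝ) + α * q / n) * cG * cN ^ (α * q / n)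
            * (Iexp n q u) ^ (2 * α / n) * gfun n α u x := by
    intro x hgx
    have hdiv : ∀ r : ℝ, 0 < r →
        (‖u x‖₊ : ℝ≥0∞) ^ 2
          ≤ ENNReal.ofReal (r ^ (2 * α)) * (cG * gfun n α u x)
            + ENNReal.ofReal (r ^ (-(2 * (n : ℝ) / q))) * (cN * I2q) := by
      intro r hr
      have hVr : volume (ball x r) = ENNReal.ofReal (r ^ (n : ℕ)) * V₁ := by
        rw [hV₁, Measure.addHaar_ball_of_pos volume x hr, finrank_euclideanSpace_fin]
      set Vr : ℝ≥0∞ := volume (ball x r) with hVrdef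
      have hVr0 : Vr ≠ 0 := (measure_ball_pos volume x hr).ne'
      have hVrt : Vr ≠ ∞ := measure_ball_lt_top.ne
      have hbb := ball_bound hα hu hq x hr
      have eq1 : ENNReal.ofReal (r ^ (2 * α)) * (cG * gfun n α u x) * Vr
          = 3 * (ENNReal.ofReal (r ^ ((n : ℝ) + 2 * α)) * gfun n α u x) := by
        have hmul : ENNReal.ofReal (r ^ (2 * α)) * ENNReal.ofReal (r ^ (n : ℕ))
            = ENNReal.ofReal (r ^ ((n : ℝ) + 2 * α)) := by
          rw [← ENNReal.ofReal_mul (by positivity)]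
          congr 1
          rw [← Real.rpow_natCast r n, ← Real.rpow_add hr]
          ring_nf
        calc ENNReal.ofReal (r ^ (2 * α)) * (cG * gfun n α u x) * Vr
            = (ENNReal.ofReal (r ^ (2 * α)) * ENNReal.ofReal (r ^ (n : ℕ)))
                * (V₁⁻¹ * V₁) * (3 * gfun n α u x) := by rw [hcG, hVr]; ring
          _ = 3 * (ENNReal.ofReal (r ^ ((n : ℝ) + 2 * α)) * gfun n α u x) := by
              rw [hmul, ENNReal.inv_mul_cancel hV0 hVt, mul_one]; ring
      have eq2 : ENNReal.ofReal (r ^ (-(2 * (n : ℝ) / q))) * (cN * I2q) * Vr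
          = 3 * (I2q * Vr ^ (1 - 2 / q)) := by
        have hVrpow : Vr ^ ((1 : ℝ) - 2 / q)
            = Vr * (ENNReal.ofReal (r ^ (-(2 * (n : ℝ) / q))) * V₁ ^ (-(2 / q))) := by
          rw [show (1 : ℝ) - 2 / q = 1 + (-(2 / q)) by ring,
            ENNReal.rpow_add _ _ hVr0 hVrt, ENNReal.rpow_one]
          congr 1
          rw [hVr, ENNReal.mul_rpow_of_ne_zero (by positivity) hV0,
            ENNReal.ofReal_rpow_of_pos (by positivity)]
          congr 2
          rw [← Real.rpow_natCast r n, ← Real.rpow_mul hr.le]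
          congr 1
          ring
        calc ENNReal.ofReal (r ^ (-(2 * (n : ℝ) / q))) * (cN * I2q) * Vr
            = 3 * (I2q * (Vr * (ENNReal.ofReal (r ^ (-(2 * (n : ℝ) / q)))
                * V₁ ^ (-(2 / q))))) := by rw [hcN]; ring
          _ = 3 * (I2q * Vr ^ ((1 : ℝ) - 2 / q)) := by rw [hVrpow]
      have hBVr : (ENNReal.ofReal (r ^ (2 * α)) * (cG * gfun n α u x)
            + ENNReal.ofReal (r ^ (-(2 * (n : ℝ) / q))) * (cN * I2q)) * Vr
          = 3 * (ENNReal.ofReal (r ^ ((n : ℝ) + 2 * α)) * gfun n α u x)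
            + 3 * (I2q * Vr ^ ((1 : ℝ) - 2 / q)) := by
        rw [add_mul, eq1, eq2]
      rw [← hBVr] at hbb
      exact (ENNReal.mul_le_mul_iff_left hVr0 hVrt).mp hbb
    have hβ : (0 : ℝ) < 2 * α := by linarith
    have hγ : (0 : ℝ) < 2 * (n : ℝ) / q := by positivity
    have hGne : cG * gfun n α u x ≠ ∞ := ENNReal.mul_ne_top hcGt hgx
    have hNne : cN * I2q ≠ ∞ := ENNReal.mul_ne_top hcNt hIq2t
    have hopt := opt hβ hγ hGne hNne hdiv
    have he : (0 : ℝ) ≤ 1 + α * q / n := by positivity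
    have hraise := ENNReal.rpow_le_rpow hopt he
    have hqn0 : α * q + (n : ℝ) ≠ 0 := by positivity
    have ht1 : 2 * (n : ℝ) / q / (2 * α + 2 * (n : ℝ) / q) * (1 + α * q / n) = 1 := by
      field_simp
      ring
    have ht2 : 2 * α / (2 * α + 2 * (n : ℝ) / q) * (1 + α * q / n) = α * q / n := by
      field_simp
      ring
    calc (‖u x‖₊ : ℝ≥0∞) ^ ((2 : ℝ) + 2 * α * q / n)
        = ((‖u x‖₊ : ℝ≥0∞) ^ 2) ^ ((1 : ℝ) + α * q / n) := by
          rw [← ENNReal.rpow_natCast _ 2, ← ENNReal.rpow_mul]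
          congr 1
          push_cast
          ring
      _ ≤ (2 * ((cG * gfun n α u x) ^ (2 * (n : ℝ) / q / (2 * α + 2 * (n : ℝ) / q))
            * (cN * I2q) ^ (2 * α / (2 * α + 2 * (n : ℝ) / q)))) ^ ((1 : ℝ) + α * q / n) :=
          hraise
      _ = 2 ^ ((1 : ℝ) + α * q / n) * (cG * gfun n α u x)
            * (cN * I2q) ^ (α * q / n) := by
          rw [ENNReal.mul_rpow_of_nonneg _ _ he, ENNReal.mul_rpow_of_nonneg _ _ he,
            ← ENNReal.rpow_mul, ← ENNReal.rpow_mul, ht1, ht2, ENNReal.rpow_one]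
          ring
      _ = 2 ^ ((1 : ℝ) + α * q / n) * cG * cN ^ (α * q / n)
            * (Iexp n q u) ^ (2 * α / n) * gfun n α u x := by
          rw [ENNReal.mul_rpow_of_nonneg _ _ (by positivity : (0:ℝ) ≤ α * q / n), hI2q,
            ← ENNReal.rpow_mul,
            show 2 / q * (α * q / n) = 2 * α / n by field_simp]
          ring
  have hKIt : 2 ^ ((1 : ℝ) + α * q / n) * cG * cN ^ (α * q / n)
      * (Iexp n q u) ^ (2 * α / n) ≠ ∞ :=
    ENNReal.mul_ne_top (ENNReal.mul_ne_top (ENNReal.mul_ne_top (h2net _) hcGt) (hcNpt _))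
      (ENNReal.rpow_ne_top_of_nonneg (by positivity) hIq)
  calc Iexp n (2 + 2 * α * q / n) u
      ≤ ∫⁻ x, (2 ^ ((1 : ℝ) + α * q / n) * cG * cN ^ (α * q / n)
          * (Iexp n q u) ^ (2 * α / n)) * gfun n α u x := by
        refine lintegral_mono_ae ?_
        filter_upwards [ae_lt_top (gfun_measurable hα.le hu) hD] with x hx
        exact main x hx.ne
    _ = (2 ^ ((1 : ℝ) + α * q / n) * cG * cN ^ (α * q / n)
          * (Iexp n q u) ^ (2 * α / n)) * Dsq n α u := lintegral_const_mul' _ _ hKIt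
    _ = 2 ^ ((1 : ℝ) + α * q / n) * cG * cN ^ (α * q / n) * Dsq n α u
          * (Iexp n q u) ^ (2 * α / n) := by ring

lemma I2_eq {n : ℕ} (u : EuclideanSpace ℝ (Fin n) → ℂ) :
    eLpNorm u 2 volume = (Iexp n 2 u) ^ (1 / 2 : ℝ) := by
  rw [eLpNorm_eq_lintegral_rpow_enorm_toReal two_ne_zero ENNReal.ofNat_ne_top]
  simp [Iexp, ENNReal.toReal_ofNat, enorm_eq_nnnorm]

lemma iter {n : ℕ} (hn : 1 ≤ n) {α : ℝ} (hα : 0 < α) (h2α : 2 * α < n) (k : ℕ) :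
    ∃ p : ℝ, 2 ≤ p ∧ p < 2 * (n : ℝ) / ((n : ℝ) - 2 * α) ∧
      2 * (n : ℝ) / ((n : ℝ) - 2 * α) - p
        = (2 * α / n) ^ k * (2 * (n : ℝ) / ((n : ℝ) - 2 * α) - 2) ∧
      ∃ K : ℝ≥0∞, K ≠ 0 ∧ K ≠ ∞ ∧ ∀ u : EuclideanSpace ℝ (Fin n) → ℂ, Measurable u →
        Iexp n 2 u ≠ ∞ → Dsq n α u ≠ ∞ →
        Iexp n p u ≠ ∞ ∧
        Iexp n p u ≤ K * (Dsq n α u) ^ ((n : ℝ) * (p - 2) / (4 * α))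
          * (Iexp n 2 u) ^ ((p - (n : ℝ) * (p - 2) / (2 * α)) / 2) := by
  have hn0 : (0 : ℝ) < n := by exact_mod_cast hn
  have hden : (0 : ℝ) < (n : ℝ) - 2 * α := by linarith
  induction k with
  | zero =>
    refine ⟨2, le_refl _, ?_, by norm_num, 1, one_ne_zero, ENNReal.one_ne_top, ?_⟩
    · rw [lt_div_iff₀ hden]
      linarith
    · intro u hu hI2 hD
      refine ⟨hI2, ?_⟩
      rw [show (n : ℝ) * (2 - 2) / (4 * α) = 0 by ring,
        show ((2 : ℝ) - (n : ℝ) * (2 - 2) / (2 * α)) / 2 = 1 by ring,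
        ENNReal.rpow_zero, ENNReal.rpow_one, one_mul, one_mul]
  | succ k ih =>
    obtain ⟨p, hp2, hpc, hgap, K, hK0, hKt, hbound⟩ := ih
    obtain ⟨Ks, hKs0, hKst, hstep⟩ := step hn hα h2α hp2
    refine ⟨2 + 2 * α * p / n, ?_, ?_, ?_, Ks * K ^ (2 * α / n), ?_, ?_, ?_⟩
    · have hp0 : (0:ℝ) < p := by linarith
      have : (0:ℝ) < 2 * α * p / n := by positivity
      linarith
    · have hrec : 2 * (n : ℝ) / ((n : ℝ) - 2 * α) - (2 + 2 * α * p / n)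
          = (2 * α / n) * (2 * (n : ℝ) / ((n : ℝ) - 2 * α) - p) := by
        field_simp
        ring
      have : (0:ℝ) < 2 * (n : ℝ) / ((n : ℝ) - 2 * α) - p := by linarith
      nlinarith [mul_pos (by positivity : (0:ℝ) < 2 * α / n) this]
    · rw [show 2 * (n : ℝ) / ((n : ℝ) - 2 * α) - (2 + 2 * α * p / n)
          = (2 * α / n) * (2 * (n : ℝ) / ((n : ℝ) - 2 * α) - p) by field_simp; ring,
        hgap, pow_succ]
      ring
    · exact mul_ne_zero hKs0 (by simp [ENNReal.rpow_eq_zero_iff, hK0, hKt])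
    · exact ENNReal.mul_ne_top hKst (by simp [ENNReal.rpow_eq_top_iff, hK0, hKt])
    · intro u hu hI2 hD
      obtain ⟨hIpt, hIp⟩ := hbound u hu hI2 hD
      have hθ : (0:ℝ) ≤ 2 * α / n := by positivity
      have hA : (0:ℝ) ≤ (n : ℝ) * (p - 2) / (4 * α) := by
        have : (0:ℝ) ≤ p - 2 := by linarith
        positivity
      have hB : (0:ℝ) ≤ (p - (n : ℝ) * (p - 2) / (2 * α)) / 2 := by
        rw [lt_div_iff₀ hden] at hpc
        rw [le_div_iff₀ (by norm_num : (0:ℝ) < 2), zero_mul, sub_nonneg, div_le_iff₀ (by positivity : (0:ℝ) < 2 * α)]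
        nlinarith
      have hstep' := hstep u hu hD hIpt
      have hmono := ENNReal.rpow_le_rpow hIp hθ
      have hexpand : (K * (Dsq n α u) ^ ((n : ℝ) * (p - 2) / (4 * α))
            * (Iexp n 2 u) ^ ((p - (n : ℝ) * (p - 2) / (2 * α)) / 2)) ^ (2 * α / n)
          = K ^ (2 * α / n)
            * (Dsq n α u) ^ ((n : ℝ) * (p - 2) / (4 * α) * (2 * α / n))
            * (Iexp n 2 u) ^ ((p - (n : ℝ) * (p - 2) / (2 * α)) / 2 * (2 * α / n)) := by
        rw [ENNReal.mul_rpow_of_nonneg _ _ hθ, ENNReal.mul_rpow_of_nonneg _ _ hθ,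
          ← ENNReal.rpow_mul, ← ENNReal.rpow_mul]
      refine ⟨?_, ?_⟩
      · refine ne_top_of_le_ne_top ?_ hstep'
        exact ENNReal.mul_ne_top (ENNReal.mul_ne_top hKst hD)
          (ENNReal.rpow_ne_top_of_nonneg hθ hIpt)
      · calc Iexp n (2 + 2 * α * p / n) u
            ≤ Ks * Dsq n α u * (Iexp n p u) ^ (2 * α / n) := hstep'
          _ ≤ Ks * Dsq n α u * (K * (Dsq n α u) ^ ((n : ℝ) * (p - 2) / (4 * α))
                * (Iexp n 2 u) ^ ((p - (n : ℝ) * (p - 2) / (2 * α)) / 2)) ^ (2 * α / n) := by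
              gcongr
          _ = Ks * K ^ (2 * α / n)
                * (Dsq n α u) ^ ((n : ℝ) * ((2 + 2 * α * p / n) - 2) / (4 * α))
                * (Iexp n 2 u) ^ (((2 + 2 * α * p / n)
                    - (n : ℝ) * ((2 + 2 * α * p / n) - 2) / (2 * α)) / 2) := by
              rw [hexpand]
              rw [show (n : ℝ) * ((2 + 2 * α * p / n) - 2) / (4 * α)
                  = (n : ℝ) * (p - 2) / (4 * α) * (2 * α / n) + 1 by field_simp; ring]
              rw [show ((2 + 2 * α * p / n) - (n : ℝ) * ((2 + 2 * α * p / n) - 2) / (2 * α)) / 2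
                  = (p - (n : ℝ) * (p - 2) / (2 * α)) / 2 * (2 * α / n) by field_simp; ring]
              rw [ENNReal.rpow_add_of_nonneg _ _ (mul_nonneg hA hθ) zero_le_one,
                ENNReal.rpow_one]
              ring

lemma interp {n : ℕ} {u : EuclideanSpace ℝ (Fin n) → ℂ} (hu : Measurable u)
    {s p : ℝ} (h2s : 2 < s) (hsp : s < p) :
    Iexp n s u ≤ (Iexp n 2 u) ^ ((p - s) / (p - 2)) * (Iexp n p u) ^ ((s - 2) / (p - 2)) := by
  have hp2 : (0:ℝ) < p - 2 := by linarith
  set l := (p - s) / (p - 2) with hl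
  set m := (s - 2) / (p - 2) with hm
  have hl0 : (0:ℝ) < l := div_pos (by linarith) hp2
  have hm0 : (0:ℝ) < m := div_pos (by linarith) hp2
  have hsum : l + m = 1 := by rw [hl, hm]; field_simp; ring
  have hpq : (1/l).HolderConjugate (1/m) := by
    rw [Real.holderConjugate_iff]
    constructor
    · rw [lt_div_iff₀ hl0, one_mul]; linarith
    · simp only [one_div, inv_inv]; linarith
  have hfmeas : Measurable fun x : EuclideanSpace ℝ (Fin n) => (‖u x‖₊ : ℝ≥0∞) :=
    measurable_coe_nnreal_ennreal.comp hu.nnnorm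
  have H := ENNReal.lintegral_mul_le_Lp_mul_Lq volume hpq
    ((hfmeas.pow_const (2 * l)).aemeasurable) ((hfmeas.pow_const (p * m)).aemeasurable)
  simp only [Pi.mul_apply] at H
  have e1 : ∀ x : EuclideanSpace ℝ (Fin n),
      (‖u x‖₊ : ℝ≥0∞) ^ (2 * l) * (‖u x‖₊ : ℝ≥0∞) ^ (p * m) = (‖u x‖₊ : ℝ≥0∞) ^ s := by
    intro x
    rw [← ENNReal.rpow_add_of_nonneg _ _ (mul_nonneg (by norm_num) hl0.le)
      (mul_nonneg (by linarith) hm0.le)]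
    congr 1
    rw [hl, hm]
    field_simp
    ring
  have e2 : ∀ x : EuclideanSpace ℝ (Fin n),
      ((‖u x‖₊ : ℝ≥0∞) ^ (2 * l)) ^ (1/l) = (‖u x‖₊ : ℝ≥0∞) ^ (2:ℝ) := by
    intro x
    rw [← ENNReal.rpow_mul]
    congr 1
    field_simp
  have e3 : ∀ x : EuclideanSpace ℝ (Fin n),
      ((‖u x‖₊ : ℝ≥0∞) ^ (p * m)) ^ (1/m) = (‖u x‖₊ : ℝ≥0∞) ^ p := by
    intro x
    rw [← ENNReal.rpow_mul]
    congr 1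
    field_simp
  simp only [e1, e2, e3, one_div_one_div] at H
  exact H

end GN
end

open GN in
/-- Fractional Gagliardo–Nirenberg inequality: for `n > 2α`,
`0 < σ < 2α/(n−2α)`, there is `C > 0` (depending only on `n, α, σ`) such that every
measurable `u ∈ L²(ℝⁿ)` with finite Gagliardo seminorm
`[u]_α = (∫∫ |u(x)−u(y)|²/|x−y|^{n+2α})^{1/2}` lies in `L^{2σ+2}` with
`∫ |u|^{2σ+2} ≤ C · [u]_α^{nσ/α} · ‖u‖_{L²}^{2σ+2−nσ/α}`. -/
theorem stmt_14 (n : ℕ) (hn : 1 ≤ n) (α σ : ℝ) (hα : α ∈ Set.Ioo (0 : ℝ) 1)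
    (h2α : 2 * α < n) (hσ₁ : 0 < σ) (hσ₂ : σ < 2 * α / ((n : ℝ) - 2 * α)) :
    ∃ C : ℝ, 0 < C ∧ ∀ u : EuclideanSpace ℝ (Fin n) → ℂ, Measurable u →
      MemLp u 2 (volume : Measure (EuclideanSpace ℝ (Fin n))) →
      (∫⁻ x, ∫⁻ y, (‖u x - u y‖₊ : ℝ≥0∞) ^ 2
          / ENNReal.ofReal (‖x - y‖ ^ ((n : ℝ) + 2 * α))) < ⊤ →
      ∫⁻ x, (‖u x‖₊ : ℝ≥0∞) ^ (2 * σ + 2)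
        ≤ ENNReal.ofReal (C
          * ((∫⁻ x, ∫⁻ y, (‖u x - u y‖₊ : ℝ≥0∞) ^ 2
              / ENNReal.ofReal (‖x - y‖ ^ ((n : ℝ) + 2 * α))).toReal ^ (1 / 2 : ℝ))
              ^ ((n : ℝ) * σ / α)
          * ((eLpNorm u 2 (volume : Measure (EuclideanSpace ℝ (Fin n)))).toReal)
              ^ (2 * σ + 2 - (n : ℝ) * σ / α)) := by
  obtain ⟨hα0, hα1⟩ := hα
  have hn0 : (0 : ℝ) < n := by exact_mod_cast hn
  have hden : (0 : ℝ) < (n : ℝ) - 2 * α := by linarith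
  have hσn : σ * ((n : ℝ) - 2 * α) < 2 * α := (lt_div_iff₀ hden).mp hσ₂
  have hcrit2 : 2 < 2 * (n : ℝ) / ((n : ℝ) - 2 * α) := by
    rw [lt_div_iff₀ hden]
    linarith
  have h2s : (2 : ℝ) < 2 * σ + 2 := by linarith
  have hscrit : 2 * σ + 2 < 2 * (n : ℝ) / ((n : ℝ) - 2 * α) := by
    rw [lt_div_iff₀ hden]
    nlinarith
  have hθ1 : 2 * α / (n : ℝ) < 1 := by
    rw [div_lt_one hn0]
    linarith
  obtain ⟨k, hk⟩ := exists_pow_lt_of_lt_one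
    (show (0:ℝ) < (2 * (n : ℝ) / ((n : ℝ) - 2 * α) - (2 * σ + 2))
        / (2 * (n : ℝ) / ((n : ℝ) - 2 * α) - 2) by
      apply div_pos <;> linarith) hθ1
  obtain ⟨p, hp2, hpc, hgap, K, hK0, hKt, hbound⟩ := GN.iter hn hα0 h2α k
  have hsp : 2 * σ + 2 < p := by
    have h1 : (2 * α / (n : ℝ)) ^ k * (2 * (n : ℝ) / ((n : ℝ) - 2 * α) - 2)
        < (2 * (n : ℝ) / ((n : ℝ) - 2 * α) - (2 * σ + 2))
          / (2 * (n : ℝ) / ((n : ℝ) - 2 * α) - 2)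
          * (2 * (n : ℝ) / ((n : ℝ) - 2 * α) - 2) :=
      mul_lt_mul_of_pos_right hk (by linarith)
    rw [div_mul_cancel₀ _ (by linarith : 2 * (n : ℝ) / ((n : ℝ) - 2 * α) - 2 ≠ 0)] at h1
    linarith [hgap ▸ h1]
  have hp2' : (0:ℝ) < p - 2 := by linarith
  set m : ℝ := (2 * σ + 2 - 2) / (p - 2) with hm
  have hm0 : (0:ℝ) < m := div_pos (by linarith) hp2'
  have hKm0 : K ^ m ≠ 0 := by simp [ENNReal.rpow_eq_zero_iff, hK0, hKt]
  have hKmt : K ^ m ≠ ∞ := by simp [ENNReal.rpow_eq_top_iff, hK0, hKt]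
  refine ⟨(K ^ m).toReal, ENNReal.toReal_pos hKm0 hKmt, ?_⟩
  intro u hu hMem hfin
  have hD : GN.Dsq n α u ≠ ⊤ := hfin.ne
  have hI2eq : (eLpNorm u 2 volume) ^ (2:ℝ) = GN.Iexp n 2 u := by
    rw [GN.I2_eq u, ← ENNReal.rpow_mul]
    norm_num
  have hI2 : GN.Iexp n 2 u ≠ ⊤ := by
    rw [← hI2eq]
    exact ENNReal.rpow_ne_top_of_nonneg (by norm_num) hMem.eLpNorm_ne_top
  obtain ⟨hIpt, hIp⟩ := hbound u hu hI2 hD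
  have hinterp := GN.interp (u := u) hu h2s hsp
  -- exponents bookkeeping
  have hB : (0:ℝ) ≤ (p - (n : ℝ) * (p - 2) / (2 * α)) / 2 := by
    rw [lt_div_iff₀ hden] at hpc
    rw [le_div_iff₀ (by norm_num : (0:ℝ) < 2), zero_mul, sub_nonneg,
      div_le_iff₀ (by positivity : (0:ℝ) < 2 * α)]
    nlinarith
  have hl0 : (0:ℝ) < (p - (2 * σ + 2)) / (p - 2) := div_pos (by linarith) hp2'
  have key : GN.Iexp n (2 * σ + 2) u
      ≤ K ^ m * (GN.Dsq n α u) ^ ((n : ℝ) * σ / (2 * α))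
        * (GN.Iexp n 2 u) ^ (σ + 1 - (n : ℝ) * σ / (2 * α)) := by
    calc GN.Iexp n (2 * σ + 2) u
        ≤ (GN.Iexp n 2 u) ^ ((p - (2 * σ + 2)) / (p - 2)) * (GN.Iexp n p u) ^ m := hinterp
      _ ≤ (GN.Iexp n 2 u) ^ ((p - (2 * σ + 2)) / (p - 2))
            * (K * (GN.Dsq n α u) ^ ((n : ℝ) * (p - 2) / (4 * α))
              * (GN.Iexp n 2 u) ^ ((p - (n : ℝ) * (p - 2) / (2 * α)) / 2)) ^ m := by
          gcongr
      _ = K ^ m * (GN.Dsq n α u) ^ ((n : ℝ) * (p - 2) / (4 * α) * m)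
            * ((GN.Iexp n 2 u) ^ ((p - (2 * σ + 2)) / (p - 2)
              + (p - (n : ℝ) * (p - 2) / (2 * α)) / 2 * m)) := by
          rw [ENNReal.mul_rpow_of_nonneg _ _ hm0.le, ENNReal.mul_rpow_of_nonneg _ _ hm0.le,
            ← ENNReal.rpow_mul, ← ENNReal.rpow_mul,
            ENNReal.rpow_add_of_nonneg _ _ hl0.le (mul_nonneg hB hm0.le)]
          ring
      _ = K ^ m * (GN.Dsq n α u) ^ ((n : ℝ) * σ / (2 * α))
            * (GN.Iexp n 2 u) ^ (σ + 1 - (n : ℝ) * σ / (2 * α)) := by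
          rw [show (n : ℝ) * (p - 2) / (4 * α) * m = (n : ℝ) * σ / (2 * α) by
              rw [hm]; field_simp; ring,
            show (p - (2 * σ + 2)) / (p - 2) + (p - (n : ℝ) * (p - 2) / (2 * α)) / 2 * m
                = σ + 1 - (n : ℝ) * σ / (2 * α) by
              rw [hm]; field_simp; ring]
  have ha1 : ((GN.Dsq n α u).toReal ^ (1 / 2 : ℝ)) ^ ((n : ℝ) * σ / α)
      = ((GN.Dsq n α u) ^ ((n : ℝ) * σ / (2 * α))).toReal := by
    rw [← Real.rpow_mul ENNReal.toReal_nonneg,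
      show (1 / 2 : ℝ) * ((n : ℝ) * σ / α) = (n : ℝ) * σ / (2 * α) by ring,
      ENNReal.toReal_rpow]
  have ha2 : (eLpNorm u 2 volume).toReal ^ (2 * σ + 2 - (n : ℝ) * σ / α)
      = ((GN.Iexp n 2 u) ^ (σ + 1 - (n : ℝ) * σ / (2 * α))).toReal := by
    rw [GN.I2_eq u, ENNReal.toReal_rpow, ← ENNReal.rpow_mul,
      show (1 / 2 : ℝ) * (2 * σ + 2 - (n : ℝ) * σ / α) = σ + 1 - (n : ℝ) * σ / (2 * α) by ring]
  have hE1 : (0:ℝ) ≤ (n : ℝ) * σ / (2 * α) := by positivity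
  have hE2 : (0:ℝ) ≤ σ + 1 - (n : ℝ) * σ / (2 * α) := by
    rw [sub_nonneg, div_le_iff₀ (by positivity : (0:ℝ) < 2 * α)]
    nlinarith
  have hRHS : ENNReal.ofReal ((K ^ m).toReal
        * ((GN.Dsq n α u).toReal ^ (1 / 2 : ℝ)) ^ ((n : ℝ) * σ / α)
        * (eLpNorm u 2 volume).toReal ^ (2 * σ + 2 - (n : ℝ) * σ / α))
      = K ^ m * (GN.Dsq n α u) ^ ((n : ℝ) * σ / (2 * α))
        * (GN.Iexp n 2 u) ^ (σ + 1 - (n : ℝ) * σ / (2 * α)) := by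
    rw [ha1, ha2, ENNReal.ofReal_mul (mul_nonneg ENNReal.toReal_nonneg ENNReal.toReal_nonneg),
      ENNReal.ofReal_mul ENNReal.toReal_nonneg,
      ENNReal.ofReal_toReal hKmt,
      ENNReal.ofReal_toReal (ENNReal.rpow_ne_top_of_nonneg hE1 hD),
      ENNReal.ofReal_toReal (ENNReal.rpow_ne_top_of_nonneg hE2 hI2)]
  exact hRHS ▸ key
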